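/- Let z₁, z₂ ∈ (−1,1) with z₁ ≠ z₂. For x(θ₁) = (√(1−z₁²)cos θ₁, √(1−z₁²)sin θ₁, z₁) and y(θ₂) = (√(1−z₂²)cos θ₂, √(1−z₂²)sin θ₂, z₂), the average (1/(4π²)) ∫₀^{2π}∫₀^{2π} −log‖x(θ₁) − y(θ₂)‖ dθ₁ dθ₂ equals −(1/2) log(1 − z₁z₂ + |z₁ − z₂|). -/

import Mathlib

open Real Complex Metric

lemma log_circle_integral (p q : ℝ) (hq : 0 ≤ q) (hpq : q < p) :
    ∫ θ in (0:ℝ)..(2*π), Real.log (p^2 + q^2 - 2*p*q*Real.cos θ)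
      = 2*π * Real.log (p^2) := by
  have hp : 0 < p := lt_of_le_of_lt hq hpq
  set f : ℂ → ℂ := fun z => Complex.log ((p:ℂ) - (q:ℂ) * z) with hf
  have hslit : ∀ z : ℂ, ‖z‖ ≤ 1 → ((p:ℂ) - (q:ℂ) * z) ∈ Complex.slitPlane := by
    intro z hz
    left
    have : z.re ≤ 1 := le_trans (Complex.re_le_norm z) hz
    have h2 : -1 ≤ z.re := by
      have := Complex.abs_re_le_norm z
      have := abs_le.mp (le_trans (Complex.abs_re_le_norm z) hz)
      linarith [this.1]
    simp only [Complex.sub_re, Complex.ofReal_re, Complex.mul_re, Complex.ofReal_im]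
    nlinarith [Complex.abs_re_le_norm z, abs_le.mp (le_trans (Complex.abs_re_le_norm z) hz)]
  have hdiff : DifferentiableOn ℂ f (closedBall (0:ℂ) 1) := by
    intro z hz
    have hz1 : ‖z‖ ≤ 1 := by simpa [Complex.dist_eq] using hz
    exact (((differentiableAt_const _).sub ((differentiableAt_const _).mul
      differentiableAt_id)).differentiableWithinAt.clog (hslit z hz1))
  have hd : DiffContOnCl ℂ f (ball (0:ℂ) 1) := by
    apply DifferentiableOn.diffContOnCl
    rwa [closure_ball (0:ℂ) one_ne_zero]
  have hc := hd.circleIntegral_sub_inv_smul (mem_ball_self one_pos)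
  have hcont : Continuous (fun θ : ℝ => f (circleMap 0 1 θ)) := by
    rw [continuous_iff_continuousAt]
    intro θ
    exact (continuousAt_const.sub (continuousAt_const.mul
      (continuous_circleMap 0 1).continuousAt)).clog
      (hslit _ (by simp [norm_circleMap_zero]))
  have hint : IntervalIntegrable (fun θ => f (circleMap 0 1 θ)) MeasureTheory.volume 0 (2*π) :=
    hcont.intervalIntegrable _ _
  have hcirc : (∮ z in C((0:ℂ), 1), (z - 0)⁻¹ • f z)
      = ∫ θ in (0:ℝ)..(2*π), I * f (circleMap 0 1 θ) := by
    rw [circleIntegral]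
    refine intervalIntegral.integral_congr fun θ _ => ?_
    rw [deriv_circleMap]
    have hne : circleMap 0 1 θ ≠ 0 := circleMap_ne_center one_ne_zero
    field_simp [smul_eq_mul]
    rw [smul_eq_mul, smul_eq_mul, sub_zero, one_div,
      show circleMap 0 1 θ * I * ((circleMap 0 1 θ)⁻¹ * f (circleMap 0 1 θ))
        = I * f (circleMap 0 1 θ) * (circleMap 0 1 θ * (circleMap 0 1 θ)⁻¹) by ring,
      mul_inv_cancel₀ hne, mul_one]
  rw [hcirc, intervalIntegral.integral_const_mul] at hc
  have hf0 : f 0 = Complex.log (p:ℂ) := by simp [hf]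
  have hInt : (∫ θ in (0:ℝ)..(2*π), f (circleMap 0 1 θ)) = (2*π : ℂ) * Complex.log (p:ℂ) := by
    apply mul_left_cancel₀ Complex.I_ne_zero
    rw [hc, hf0]
    simp [smul_eq_mul]
    ring
  have hre : (∫ θ in (0:ℝ)..(2*π), (f (circleMap 0 1 θ)).re) = 2*π * Real.log p := by
    have := Complex.reCLM.intervalIntegral_comp_comm hint
    simp only [Complex.reCLM_apply] at this
    rw [this, hInt]
    have : ((2*π : ℝ) : ℂ) * Complex.log (p:ℂ) = ((2*π:ℝ):ℂ) * Complex.log (p:ℂ) := rfl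
    push_cast
    rw [show ((2:ℂ)*π) = (((2*π:ℝ)):ℂ) by push_cast; ring, Complex.re_ofReal_mul,
      Complex.log_ofReal_re]
  have hptw : ∀ θ : ℝ, Real.log (p^2 + q^2 - 2*p*q*Real.cos θ)
      = 2 * (f (circleMap 0 1 θ)).re := by
    intro θ
    have habs : (‖(p:ℂ) - q * circleMap 0 1 θ‖)^2
        = p^2 + q^2 - 2*p*q*Real.cos θ := by
      rw [Complex.sq_norm, Complex.normSq_apply]
      simp only [circleMap, Complex.ofReal_one, one_mul, zero_add, Complex.sub_re,
        Complex.sub_im, Complex.ofReal_re, Complex.ofReal_im, Complex.mul_re, Complex.mul_im,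
        Complex.exp_ofReal_mul_I_re, Complex.exp_ofReal_mul_I_im]
      nlinarith [Real.sin_sq_add_cos_sq θ]
    have habspos : 0 < ‖(p:ℂ) - q * circleMap 0 1 θ‖ := by
      nlinarith [habs, norm_nonneg ((p:ℂ) - q * circleMap 0 1 θ),
        mul_nonneg (mul_nonneg hp.le hq) (sub_nonneg.mpr (Real.cos_le_one θ)),
        mul_pos (sub_pos.mpr hpq) (sub_pos.mpr hpq)]
    rw [hf]
    simp only [Complex.log_re]
    rw [← habs, Real.log_pow]
    push_cast
    ring
  calc ∫ θ in (0:ℝ)..(2*π), Real.log (p^2 + q^2 - 2*p*q*Real.cos θ)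
      = ∫ θ in (0:ℝ)..(2*π), 2 * (f (circleMap 0 1 θ)).re := by
        exact intervalIntegral.integral_congr fun θ _ => hptw θ
    _ = 2 * ∫ θ in (0:ℝ)..(2*π), (f (circleMap 0 1 θ)).re := by
        rw [intervalIntegral.integral_const_mul]
    _ = 2*π * Real.log (p^2) := by
        rw [hre, Real.log_pow]; push_cast; ring

set_option maxHeartbeats 1000000 in
theorem stmt1 (z₁ z₂ : ℝ) (h₁ : z₁ ∈ Set.Ioo (-1:ℝ) 1) (h₂ : z₂ ∈ Set.Ioo (-1:ℝ) 1)
    (hne : z₁ ≠ z₂)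
    (x y : ℝ → EuclideanSpace ℝ (Fin 3))
    (hx : ∀ θ, x θ = ![Real.sqrt (1 - z₁ ^ 2) * Real.cos θ,
      Real.sqrt (1 - z₁ ^ 2) * Real.sin θ, z₁])
    (hy : ∀ θ, y θ = ![Real.sqrt (1 - z₂ ^ 2) * Real.cos θ,
      Real.sqrt (1 - z₂ ^ 2) * Real.sin θ, z₂]) :
    (1 / (4 * π ^ 2)) *
      ∫ θ₁ in (0:ℝ)..(2 * π), ∫ θ₂ in (0:ℝ)..(2 * π), -Real.log ‖x θ₁ - y θ₂‖
      = -(1 / 2) * Real.log (1 - z₁ * z₂ + |z₁ - z₂|) := by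
  obtain ⟨hz1l, hz1r⟩ := h₁
  obtain ⟨hz2l, hz2r⟩ := h₂
  set r₁ := Real.sqrt (1 - z₁ ^ 2) with hr₁def
  set r₂ := Real.sqrt (1 - z₂ ^ 2) with hr₂def
  have h1pos : (0:ℝ) < 1 - z₁ ^ 2 := by nlinarith
  have h2pos : (0:ℝ) < 1 - z₂ ^ 2 := by nlinarith
  have hr1 : r₁ ^ 2 = 1 - z₁ ^ 2 := Real.sq_sqrt h1pos.le
  have hr2 : r₂ ^ 2 = 1 - z₂ ^ 2 := Real.sq_sqrt h2pos.le
  have hr1p : 0 < r₁ := Real.sqrt_pos.mpr h1pos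
  have hr2p : 0 < r₂ := Real.sqrt_pos.mpr h2pos
  have hA : 0 < 1 - z₁ * z₂ := by nlinarith
  have hAr : r₁ * r₂ < 1 - z₁ * z₂ := by
    have hzz : 0 < (z₁ - z₂) ^ 2 :=
      lt_of_le_of_ne (sq_nonneg _) (Ne.symm (pow_ne_zero 2 (sub_ne_zero.mpr hne)))
    nlinarith [mul_pos hr1p hr2p]
  set s := Real.sqrt (2 * (1 - z₁ * z₂ + r₁ * r₂)) with hsdef
  set t := Real.sqrt (2 * (1 - z₁ * z₂ - r₁ * r₂)) with htdef
  have hs2 : s ^ 2 = 2 * (1 - z₁ * z₂ + r₁ * r₂) := Real.sq_sqrt (by nlinarith)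
  have ht2 : t ^ 2 = 2 * (1 - z₁ * z₂ - r₁ * r₂) := Real.sq_sqrt (by nlinarith)
  have hspos : 0 < s := Real.sqrt_pos.mpr (by nlinarith [mul_pos hr1p hr2p])
  have htpos : 0 < t := Real.sqrt_pos.mpr (by nlinarith)
  have hts : t ≤ s := Real.sqrt_le_sqrt (by nlinarith [mul_pos hr1p hr2p])
  set p := (s + t) / 2 with hpdef
  set q := (s - t) / 2 with hqdef
  have hq : 0 ≤ q := by simp [hqdef]; linarith
  have hpq : q < p := by simp [hpdef, hqdef]; linarith
  have hst : s * t = 2 * |z₁ - z₂| := by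
    rw [hsdef, htdef, ← Real.sqrt_mul (by nlinarith [mul_pos hr1p hr2p])]
    have : 2 * (1 - z₁ * z₂ + r₁ * r₂) * (2 * (1 - z₁ * z₂ - r₁ * r₂))
        = (2 * (z₁ - z₂)) ^ 2 := by
      linear_combination (-4 * r₂ ^ 2) * hr1 + (-4 * (1 - z₁ ^ 2)) * hr2
    rw [this, Real.sqrt_sq_eq_abs, abs_mul]
    simp
  have hsum : p ^ 2 + q ^ 2 = 2 - 2 * z₁ * z₂ := by
    have : p ^ 2 + q ^ 2 = (s ^ 2 + t ^ 2) / 2 := by rw [hpdef, hqdef]; ring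
    rw [this, hs2, ht2]; ring
  have hprod : 2 * p * q = 2 * (r₁ * r₂) := by
    have : 2 * p * q = (s ^ 2 - t ^ 2) / 2 := by rw [hpdef, hqdef]; ring
    rw [this, hs2, ht2]; ring
  have hL : p ^ 2 = 1 - z₁ * z₂ + |z₁ - z₂| := by
    have : p ^ 2 = (s ^ 2 + t ^ 2 + 2 * (s * t)) / 4 := by rw [hpdef]; ring
    rw [this, hs2, ht2, hst]; ring
  have hDpos : ∀ u : ℝ, 0 < p ^ 2 + q ^ 2 - 2 * p * q * Real.cos u := by
    intro u
    nlinarith [Real.cos_le_one u, mul_nonneg (mul_nonneg (le_of_lt (lt_of_le_of_lt hq hpq)) hq)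
      (sub_nonneg.mpr (Real.cos_le_one u)), mul_pos (sub_pos.mpr hpq) (sub_pos.mpr hpq)]
  have hnormsq : ∀ θ₁ θ₂ : ℝ, ‖x θ₁ - y θ₂‖ ^ 2
      = p ^ 2 + q ^ 2 - 2 * p * q * Real.cos (θ₁ - θ₂) := by
    intro θ₁ θ₂
    rw [EuclideanSpace.norm_eq, Real.sq_sqrt (by positivity)]
    simp only [PiLp.sub_apply, hx, hy, Fin.sum_univ_three, Matrix.cons_val_zero, Matrix.cons_val_one,
      Matrix.head_cons, Matrix.cons_val_two, Matrix.tail_cons, Real.norm_eq_abs, _root_.sq_abs,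
      Real.cos_sub]
    linear_combination r₁ ^ 2 * Real.sin_sq_add_cos_sq θ₁ + r₂ ^ 2 * Real.sin_sq_add_cos_sq θ₂
      + hr1 + hr2 - hsum + (Real.cos θ₁ * Real.cos θ₂ + Real.sin θ₁ * Real.sin θ₂) * hprod
  have hlog : ∀ θ₁ θ₂ : ℝ, -Real.log ‖x θ₁ - y θ₂‖
      = -(1/2) * Real.log (p ^ 2 + q ^ 2 - 2 * p * q * Real.cos (θ₁ - θ₂)) := by
    intro θ₁ θ₂
    have hD := hDpos (θ₁ - θ₂)
    have hn : 0 < ‖x θ₁ - y θ₂‖ := by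
      by_contra h
      push_neg at h
      have : ‖x θ₁ - y θ₂‖ = 0 := le_antisymm h (norm_nonneg _)
      rw [← hnormsq θ₁ θ₂, this] at hD
      simp at hD
    rw [← hnormsq θ₁ θ₂, Real.log_pow]
    push_cast
    ring
  have hinner : ∀ θ₁ : ℝ, (∫ θ₂ in (0:ℝ)..(2*π), -Real.log ‖x θ₁ - y θ₂‖)
      = -π * Real.log (p ^ 2) := by
    intro θ₁
    rw [intervalIntegral.integral_congr (fun θ₂ _ => hlog θ₁ θ₂),
      intervalIntegral.integral_const_mul]
    have h2 : (∫ θ₂ in (0:ℝ)..(2*π), Real.log (p ^ 2 + q ^ 2 - 2 * p * q * Real.cos (θ₁ - θ₂)))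
        = ∫ u in (θ₁ - 2*π)..(θ₁ - 0), Real.log (p ^ 2 + q ^ 2 - 2 * p * q * Real.cos u) :=
      intervalIntegral.integral_comp_sub_left (fun u => Real.log (p ^ 2 + q ^ 2 - 2 * p * q * Real.cos u)) θ₁
    have hper : Function.Periodic
        (fun u => Real.log (p ^ 2 + q ^ 2 - 2 * p * q * Real.cos u)) (2*π) := by
      intro u; simp [Real.cos_add_two_pi]
    have h3 := hper.intervalIntegral_add_eq (θ₁ - 2*π) 0
    rw [h2, show θ₁ - 0 = θ₁ - 2*π + 2*π by ring, h3, zero_add,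
      log_circle_integral p q hq hpq]
    have : p ^ 2 + q ^ 2 - 2 * p * q * 1 = p ^ 2 + q ^ 2 - 2 * p * q := by ring
    ring
  have houter : (∫ θ₁ in (0:ℝ)..(2*π), ∫ θ₂ in (0:ℝ)..(2*π), -Real.log ‖x θ₁ - y θ₂‖)
      = 2 * π * (-π * Real.log (p ^ 2)) := by
    rw [intervalIntegral.integral_congr (fun θ₁ _ => hinner θ₁),
      intervalIntegral.integral_const]
    simp
  rw [houter, ← hL]
  have hπ : (π : ℝ) ≠ 0 := Real.pi_ne_zero
  field_simp
  ring
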